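/- The group with presentation ⟨x, y | x y x = y x y, x^2 = y^3⟩ is trivial. -/

import Mathlib

lemma aux_triv {G : Type*} [Group G] (a b : G) (hab : a * b * a = b * a * b)
    (h2 : a ^ 2 = b ^ 3) : a = 1 ∧ b = 1 := by
  have hc : a ^ 2 * b = b * a ^ 2 := by rw [h2]; group
  have hkey : (a * b) * a * (a * b)⁻¹ = b := by
    rw [mul_inv_rev, show a * b * a * (b⁻¹ * a⁻¹) = (a * b * a) * b⁻¹ * a⁻¹ by group, hab]
    group
  have h3 : (a * b) * a ^ 3 * (a * b)⁻¹ = a ^ 2 := by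
    have h := congrArg (· ^ 3) hkey
    simp only [conj_pow] at h
    rw [h, ← h2]
  have hcomm : a ^ 2 * (a * b) = (a * b) * a ^ 2 := by
    calc a ^ 2 * (a * b) = a * (a ^ 2 * b) := by group
    _ = a * (b * a ^ 2) := by rw [hc]
    _ = (a * b) * a ^ 2 := by group
  have h9 : a ^ 3 = a ^ 2 := by
    have h6 : (a * b) * a ^ 3 = a ^ 2 * (a * b) := by
      rw [← h3]; group
    rw [hcomm] at h6
    have := mul_left_cancel h6
    exact this
  have ha : a = 1 := by
    have : a ^ 2 * a = a ^ 2 * 1 := by rw [mul_one, ← pow_succ, h9]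
    exact mul_left_cancel this
  refine ⟨ha, ?_⟩
  have hb2 : b * 1 = b * b := by
    have hh := hab
    rw [ha] at hh
    simpa using hh.symm
  simpa using (mul_left_cancel hb2).symm

theorem stmt_0
    (x y : FreeGroup (Fin 2)) (hx : x = FreeGroup.of 0) (hy : y = FreeGroup.of 1) :
    ∀ g : PresentedGroup ({x * y * x * (y * x * y)⁻¹, x ^ 2 * (y ^ 3)⁻¹} :
      Set (FreeGroup (Fin 2))), g = 1 := by
  have hmem : ∀ r ∈ ({x * y * x * (y * x * y)⁻¹, x ^ 2 * (y ^ 3)⁻¹} :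
      Set (FreeGroup (Fin 2))), (QuotientGroup.mk r :
        PresentedGroup ({x * y * x * (y * x * y)⁻¹, x ^ 2 * (y ^ 3)⁻¹} :
          Set (FreeGroup (Fin 2)))) = 1 := fun r hr =>
    (QuotientGroup.eq_one_iff r).2 (Subgroup.subset_normalClosure hr)
  have h1 : (QuotientGroup.mk (x * y * x * (y * x * y)⁻¹) :
      PresentedGroup ({x * y * x * (y * x * y)⁻¹, x ^ 2 * (y ^ 3)⁻¹} :
        Set (FreeGroup (Fin 2)))) = 1 := hmem _ (Or.inl rfl)
  have h2 : (QuotientGroup.mk (x ^ 2 * (y ^ 3)⁻¹) :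
      PresentedGroup ({x * y * x * (y * x * y)⁻¹, x ^ 2 * (y ^ 3)⁻¹} :
        Set (FreeGroup (Fin 2)))) = 1 := hmem _ (Or.inr rfl)
  rw [QuotientGroup.mk_mul, QuotientGroup.mk_mul, QuotientGroup.mk_mul,
    QuotientGroup.mk_inv, QuotientGroup.mk_mul, QuotientGroup.mk_mul,
    mul_inv_eq_one] at h1
  rw [QuotientGroup.mk_mul, QuotientGroup.mk_inv, QuotientGroup.mk_pow,
    QuotientGroup.mk_pow, mul_inv_eq_one] at h2
  obtain ⟨hA, hB⟩ := aux_triv _ _ h1 h2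
  have key : ∀ w : FreeGroup (Fin 2), (QuotientGroup.mk w :
      PresentedGroup ({x * y * x * (y * x * y)⁻¹, x ^ 2 * (y ^ 3)⁻¹} :
        Set (FreeGroup (Fin 2)))) = 1 := by
    intro w
    induction w using FreeGroup.induction_on with
    | C1 => rfl
    | of i =>
      fin_cases i
      · exact hx ▸ hA
      · exact hy ▸ hB
    | inv_of i h => rw [QuotientGroup.mk_inv, h, inv_one]
    | mul u v hu hv => rw [QuotientGroup.mk_mul, hu, hv, mul_one]
  intro g
  exact QuotientGroup.induction_on g key
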